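/- For any real α > 1 and any m ∈ (0, 1/2], we have 4 m^{α+1} + α/m > 2 + α. -/
import Mathlib


theorem stmt_1 (α m : ℝ) (hα : 1 < α) (hm : m ∈ Set.Ioc (0 : ℝ) (1 / 2)) :
    2 + α < 4 * m ^ (α + 1) + α / m := by
  obtain ⟨hm0, hm2⟩ := hm
  set c := (2:ℝ) ^ (1 - α) with hc
  have hc0 : 0 < c := Real.rpow_pos_of_pos (by norm_num) _
  have hc1 : c ≤ 1 := Real.rpow_le_one_of_one_le_of_nonpos (by norm_num) (by linarith)
  have hlog : Real.log 2 < 1 := by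
    have := Real.log_two_lt_d9; linarith
  have hlog0 : 0 < Real.log 2 := Real.log_pos (by norm_num)
  have hce : c = Real.exp (Real.log 2 * (1 - α)) := Real.rpow_def_of_pos (by norm_num) _
  have hc2 : 2 - α < c := by
    have hx : Real.log 2 * (1 - α) ≠ 0 := by
      intro h
      rcases mul_eq_zero.mp h with h | h
      · linarith
      · linarith
    have hexp := Real.add_one_lt_exp hx
    rw [← hce] at hexp
    nlinarith [mul_nonneg (by linarith : (0:ℝ) ≤ α - 1) (by linarith : (0:ℝ) ≤ 1 - Real.log 2)]
  -- Bernoulli: (2m)^(α+1) ≥ 1 + (α+1)(2m-1)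
  have hB : 1 + (α + 1) * (2 * m - 1) ≤ (2 * m) ^ (α + 1) := by
    have := one_add_mul_self_le_rpow_one_add
      (show (-1:ℝ) ≤ 2 * m - 1 by linarith) (show (1:ℝ) ≤ α + 1 by linarith)
    convert this using 2 <;> ring
  have hmul : (2 * m) ^ (α + 1) = (2:ℝ) ^ (α + 1) * m ^ (α + 1) :=
    Real.mul_rpow (by norm_num) hm0.le
  have h4 : c * (2:ℝ) ^ (α + 1) = 4 := by
    rw [hc, ← Real.rpow_add (by norm_num : (0:ℝ) < 2)]
    rw [show (1 - α) + (α + 1) = ((2:ℕ):ℝ) by push_cast; ring, Real.rpow_natCast]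
    norm_num
  have hB' : c * (1 + (α + 1) * (2 * m - 1)) ≤ 4 * m ^ (α + 1) := by
    calc c * (1 + (α + 1) * (2 * m - 1)) ≤ c * ((2 * m) ^ (α + 1)) := by
          exact mul_le_mul_of_nonneg_left hB hc0.le
      _ = 4 * m ^ (α + 1) := by rw [hmul, ← mul_assoc, h4]
  have h1 : 2 * α + 2 * α * (1 - 2 * m) ≤ α / m := by
    rw [le_div_iff₀ hm0]
    nlinarith [sq_nonneg (1 - 2 * m), hα]
  have key : 2 + α < c * (1 + (α + 1) * (2 * m - 1)) + (2 * α + 2 * α * (1 - 2 * m)) := by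
    nlinarith [mul_nonneg (by linarith : (0:ℝ) ≤ 1 - 2 * m)
      (by nlinarith : (0:ℝ) ≤ 2 * α - c * (α + 1))]
  linarith
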